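/- With A = (1/2)·(γ_G+γ_B)·D₀ + (1/2)·(1−γ_B)·y for any real D₀, the lender's unconditional expected payoff satisfies the identity ∫_{-1}^{0} [A + (1/2)·(−x)·((1−τ)·(1−κ)·L_B − (1−γ_B)·y)]·f(x) dx + ∫_{0}^{1} [A + (1/2)·x·((1−γ_G)·y + (1−τ)·(1−κ)·L_G)]·f(x) dx = A + (1/2)·((1−τ)·(1−κ) − 1)·(γ_G−γ_B)·y·∫_{0}^{1} x·f(x) dx, and this quantity is strictly less than A. -/

import Mathlib

open MeasureTheory

/-- The lender's unconditional expected payoff across false-alarm and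
undue-optimism errors equals A + (1/2)·((1−τ)(1−κ)−1)·(γ_G−γ_B)·y·∫₀¹ x f(x) dx,
which is strictly less than A. -/
theorem stmt_2 (f : ℝ → ℝ)
    (hf_nonneg : ∀ x, 0 ≤ f x)
    (hf_supp : ∀ x : ℝ, x ∉ Set.Icc (-1 : ℝ) 1 → f x = 0)
    (hf_total : (∫ x in (-1 : ℝ)..1, f x) = 1)
    (hf_symm : ∀ x, f x = f (-x))
    (hf_cont : Continuous f)
    (hf_pos : ∀ x ∈ Set.Ioo (-1 : ℝ) 1, 0 < f x)
    (γB γG y X τ κ LG LB D₀ A : ℝ)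
    (hγB : 0 ≤ γB) (hγ : γB < γG) (hγG : γG < 1)
    (hy : 0 < y) (hX : 0 < X) (hτ0 : 0 ≤ τ) (hτ1 : τ ≤ 1)
    (hκ0 : 0 < κ) (hκ1 : κ < 1)
    (hLG : LG = X - (1 - γG) * y) (hLGpos : 0 < LG)
    (hLB : LB = (1 - γB) * y - X) (hLBpos : 0 < LB)
    (hA : A = (1/2) * (γG + γB) * D₀ + (1/2) * (1 - γB) * y) :
    ((∫ x in (-1 : ℝ)..0, (A + (1/2) * (-x) * ((1-τ)*(1-κ)*LB - (1-γB)*y)) * f x)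
      + (∫ x in (0 : ℝ)..1, (A + (1/2) * x * ((1-γG)*y + (1-τ)*(1-κ)*LG)) * f x)
      = A + (1/2) * ((1-τ)*(1-κ) - 1) * (γG - γB) * y * (∫ x in (0 : ℝ)..1, x * f x)) ∧
    A + (1/2) * ((1-τ)*(1-κ) - 1) * (γG - γB) * y * (∫ x in (0 : ℝ)..1, x * f x) < A := by
  have hint : ∀ a b : ℝ, ∀ g : ℝ → ℝ, Continuous g →
      IntervalIntegrable g volume a b := fun a b g hg => hg.intervalIntegrable a b
  have hxf : Continuous (fun x : ℝ => x * f x) := continuous_id.mul hf_cont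
  have hnxf : Continuous (fun x : ℝ => (-x) * f x) := continuous_neg.mul hf_cont
  -- symmetry of mass
  have hmass : (∫ x in (-1 : ℝ)..0, f x) = ∫ x in (0 : ℝ)..1, f x := by
    have := intervalIntegral.integral_comp_neg (a := (0:ℝ)) (b := 1) f
    simp only [neg_zero, neg_neg] at this
    rw [← this]
    exact intervalIntegral.integral_congr (fun x _ => (hf_symm x).symm)
  have hsum : (∫ x in (-1 : ℝ)..0, f x) + (∫ x in (0 : ℝ)..1, f x) = 1 := by
    rw [intervalIntegral.integral_add_adjacent_intervals (hint _ _ _ hf_cont)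
      (hint _ _ _ hf_cont), hf_total]
  have hhalf : (∫ x in (0 : ℝ)..1, f x) = 1/2 := by linarith [hmass, hsum]
  have hhalf' : (∫ x in (-1 : ℝ)..0, f x) = 1/2 := by linarith
  -- symmetry of first moment
  have hmom : (∫ x in (-1 : ℝ)..0, (-x) * f x) = ∫ x in (0 : ℝ)..1, x * f x := by
    have := intervalIntegral.integral_comp_neg (a := (0:ℝ)) (b := 1)
      (fun x => (-x) * f x)
    simp only [neg_zero, neg_neg] at this
    rw [← this]
    exact intervalIntegral.integral_congr (fun x _ => by
      simp [← hf_symm x])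
  -- positivity of first moment
  have hIpos : 0 < ∫ x in (0 : ℝ)..1, x * f x := by
    apply intervalIntegral.intervalIntegral_pos_of_pos_on (hint _ _ _ hxf)
    · intro x hx
      exact mul_pos hx.1 (hf_pos x ⟨by linarith [hx.1], hx.2⟩)
    · norm_num
  set CB := (1-τ)*(1-κ)*LB - (1-γB)*y with hCB
  set CG := (1-γG)*y + (1-τ)*(1-κ)*LG with hCG
  have e1 : (∫ x in (-1 : ℝ)..0, (A + (1/2) * (-x) * CB) * f x)
      = A * (∫ x in (-1 : ℝ)..0, f x)
        + ((1/2) * CB) * ∫ x in (-1 : ℝ)..0, (-x) * f x := by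
    rw [← intervalIntegral.integral_const_mul, ← intervalIntegral.integral_const_mul,
      ← intervalIntegral.integral_add (hint _ _ (fun x => A * f x) (continuous_const.mul hf_cont))
        (hint _ _ (fun x => 1/2 * CB * (-x * f x)) (continuous_const.mul hnxf))]
    exact intervalIntegral.integral_congr (fun x _ => by ring)
  have e2 : (∫ x in (0 : ℝ)..1, (A + (1/2) * x * CG) * f x)
      = A * (∫ x in (0 : ℝ)..1, f x)
        + ((1/2) * CG) * ∫ x in (0 : ℝ)..1, x * f x := by
    rw [← intervalIntegral.integral_const_mul, ← intervalIntegral.integral_const_mul,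
      ← intervalIntegral.integral_add (hint _ _ (fun x => A * f x) (continuous_const.mul hf_cont))
        (hint _ _ (fun x => 1/2 * CG * (x * f x)) (continuous_const.mul hxf))]
    exact intervalIntegral.integral_congr (fun x _ => by ring)
  constructor
  · rw [e1, e2, hhalf, hhalf', hmom, hCB, hCG, hLG, hLB]
    ring
  · have hcoef : (1-τ)*(1-κ) - 1 < 0 := by nlinarith
    have hy' : 0 < (γG - γB) * y := mul_pos (by linarith) hy
    nlinarith [mul_pos (mul_pos (neg_pos.2 hcoef) hy') hIpos]
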